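/- Suppose the Veselova parameters are related to the Chaplygin parameters by â_i = 1 − d a_i for i = 1,2,3. Then at every point (x,K) ∈ ℝ^6 with (x,x) = 1 and 1 − d(x,Ax) > 0 one has ĝ(x) := (x,Âx)^{1/2} = g(x) := (1 − d(x,Ax))^{1/2}, and the Veselova structure matrix coincides with the Chaplygin structure matrix: ε_{ijk}( ĝ K_k + x_k ( Σ_{m=1}^3 K_m ∂ĝ/∂x_m − (x,K)/ĝ ) ) = ε_{ijk}( g K_k − (d(K,Ax)/g) x_k ) for all i,j (summation over k), and ε_{ijk} ĝ x_k = ε_{ijk} g x_k. -/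

import Mathlib

open scoped BigOperators

noncomputable section

abbrev Pt3 : Type := (Fin 3 → ℝ) × (Fin 3 → ℝ)

/-- Euclidean scalar product on ℝ³ -/
def dot (a b : Fin 3 → ℝ) : ℝ := ∑ i, a i * b i

/-- totally antisymmetric Levi-Civita symbol on `Fin 3` -/
def eps (i j k : Fin 3) : ℝ :=
  ((((i : ℕ) : ℝ) - ((j : ℕ) : ℝ)) * (((j : ℕ) : ℝ) - ((k : ℕ) : ℝ))
    * (((k : ℕ) : ℝ) - ((i : ℕ) : ℝ))) / 2

/-- vector cross product on ℝ³ -/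
def cross (a b : Fin 3 → ℝ) : Fin 3 → ℝ := fun i => ∑ j, ∑ k, eps i j k * a j * b k

/-- partial derivative in the coordinate `x i` -/
def dx (f : Pt3 → ℝ) (i : Fin 3) (z : Pt3) : ℝ := fderiv ℝ f z (Pi.single i 1, 0)

/-- partial derivative in the coordinate `M i` (second group of coordinates) -/
def dM (f : Pt3 → ℝ) (i : Fin 3) (z : Pt3) : ℝ := fderiv ℝ f z (0, Pi.single i 1)

/-- partial derivative of a function of `x` only -/
def dxg (g : (Fin 3 → ℝ) → ℝ) (i : Fin 3) (x : Fin 3 → ℝ) : ℝ := fderiv ℝ g x (Pi.single i 1)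

/-- bracket associated with a skew-symmetric structure matrix π with
`π_{x_i x_j} = 0`, `π_{M_i x_j} = Axm i j`, `π_{M_i M_j} = Bmm i j`. -/
def piBracket (Axm Bmm : Fin 3 → Fin 3 → Pt3 → ℝ) (f h : Pt3 → ℝ) (z : Pt3) : ℝ :=
  ∑ i, ∑ j,
    (dM f i z * Axm i j z * dx h j z - dx f j z * Axm i j z * dM h i z
      + dM f i z * Bmm i j z * dM h j z)

/-- `g(x) = √(1 - d (x, A x))` with `A = diag a` -/
def gC (a : Fin 3 → ℝ) (d : ℝ) (x : Fin 3 → ℝ) : ℝ :=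
  Real.sqrt (1 - d * dot x (fun i => a i * x i))

/-- `ĝ(x) = (x, Â x)^{1/2}` -/
def ghat (ah : Fin 3 → ℝ) (x : Fin 3 → ℝ) : ℝ :=
  Real.sqrt (dot x (fun i => ah i * x i))

lemma hasFDerivAt_q (ah : Fin 3 → ℝ) (x : Fin 3 → ℝ) :
    HasFDerivAt (fun y : Fin 3 → ℝ => dot y (fun i => ah i * y i))
      (∑ i, (2 * ah i * x i) • (ContinuousLinearMap.proj i : (Fin 3 → ℝ) →L[ℝ] ℝ)) x := by
  have h : ∀ i : Fin 3, HasFDerivAt (fun y : Fin 3 → ℝ => y i * (ah i * y i))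
      ((2 * ah i * x i) • (ContinuousLinearMap.proj i : (Fin 3 → ℝ) →L[ℝ] ℝ)) x := by
    intro i
    have hp : HasFDerivAt (fun y : Fin 3 → ℝ => y i)
        (ContinuousLinearMap.proj i : (Fin 3 → ℝ) →L[ℝ] ℝ) x :=
      (ContinuousLinearMap.proj i : (Fin 3 → ℝ) →L[ℝ] ℝ).hasFDerivAt
    have := hp.mul ((hp.const_mul (ah i)))
    refine this.congr_fderiv ?_
    ext v
    simp [ContinuousLinearMap.proj]
    ring
  have := HasFDerivAt.fun_sum (fun i (_ : i ∈ Finset.univ) => h i)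
  exact this

lemma dxg_ghat (ah : Fin 3 → ℝ) (x : Fin 3 → ℝ)
    (hq : 0 < dot x (fun i => ah i * x i)) (m : Fin 3) :
    dxg (ghat ah) m x = ah m * x m / ghat ah x := by
  have hs := (Real.hasDerivAt_sqrt hq.ne').comp_hasFDerivAt x (hasFDerivAt_q ah x)
  have hF : HasFDerivAt (ghat ah) _ x := hs
  rw [dxg, hF.fderiv]
  simp [ContinuousLinearMap.sum_apply, Pi.single_apply, Finset.sum_ite_eq, ghat]
  ring

/-- under `â_i = 1 - d a_i`, on `(x,x) = 1` with `1 - d(x,Ax) > 0`, the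
Veselova structure matrix coincides with the Chaplygin structure matrix. -/
theorem veselova_chaplygin_brackets_coincide (a ah : Fin 3 → ℝ) (d : ℝ)
    (hpar : ∀ i, ah i = 1 - d * a i) (x K : Fin 3 → ℝ)
    (hx : dot x x = 1) (hU : 1 - d * dot x (fun i => a i * x i) > 0) :
    ghat ah x = gC a d x
    ∧ (∀ i j : Fin 3,
        (∑ k, eps i j k * (ghat ah x * K k
          + x k * ((∑ m, K m * dxg (ghat ah) m x) - dot x K / ghat ah x)))
        = ∑ k, eps i j k * (gC a d x * K k
          - d * dot K (fun m => a m * x m) / gC a d x * x k))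
    ∧ (∀ i j : Fin 3,
        (∑ k, eps i j k * ghat ah x * x k) = ∑ k, eps i j k * gC a d x * x k) := by
  have hq : dot x (fun i => ah i * x i) = 1 - d * dot x (fun i => a i * x i) := by
    have h1 : ∀ i : Fin 3, x i * (ah i * x i)
        = x i * x i - d * (x i * (a i * x i)) := by
      intro i; rw [hpar]; ring
    have hx' : (∑ i, x i * x i) = 1 := hx
    simp only [dot, h1, Finset.sum_sub_distrib, ← Finset.mul_sum, hx']
  have hq0 : 0 < dot x (fun i => ah i * x i) := hq ▸ hU
  have hgg : ghat ah x = gC a d x := by rw [ghat, gC, hq]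
  have hgpos : 0 < ghat ah x := Real.sqrt_pos.mpr hq0
  have hS : (∑ m, K m * dxg (ghat ah) m x)
      = (dot x K - d * dot K (fun m => a m * x m)) / ghat ah x := by
    have h1 : ∀ m : Fin 3, K m * dxg (ghat ah) m x
        = (K m * x m - d * (K m * (a m * x m))) / ghat ah x := by
      intro m
      rw [dxg_ghat ah x hq0 m, hpar]
      ring
    simp only [h1, ← Finset.sum_div, Finset.sum_sub_distrib, ← Finset.mul_sum]
    have : (∑ i, x i * K i) = ∑ i, K i * x i := by
      exact Finset.sum_congr rfl fun i _ => mul_comm _ _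
    rw [dot, dot, this]
  refine ⟨hgg, ?_, ?_⟩
  · intro i j
    refine Finset.sum_congr rfl fun k _ => ?_
    rw [hS, ← hgg]
    have : ghat ah x * K k + x k * ((dot x K - d * dot K (fun m => a m * x m)) / ghat ah x
        - dot x K / ghat ah x)
        = ghat ah x * K k - d * dot K (fun m => a m * x m) / ghat ah x * x k := by
      field_simp
      ring
    rw [this]
  · intro i j
    rw [hgg]
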